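/- For any prime p and positive integer h ≤ p-1, the maximum size of a subset A of Z/pZ such that the h-fold restricted sumset h^A (sums of h distinct elements of A) is not all of Z/pZ equals ⌊(p-2)/h⌋ + h. -/

import Mathlib

set_option linter.unusedSectionVars false
set_option maxHeartbeats 1000000

open Finset Polynomial

section CN

variable {F : Type*} [Field F] [DecidableEq F]




/-- weight for Lagrange interpolation leading coefficient -/
noncomputable def cnw (S : Finset F) (a : F) : F := ∏ b ∈ S.erase a, (a - b)⁻¹

theorem cnw_sum_pow (S : Finset F) {d : ℕ} (hd : d < S.card) :
    ∑ a ∈ S, a ^ d * cnw S a = if d = S.card - 1 then 1 else 0 := by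
  classical
  have hinj : Set.InjOn (id : F → F) S := Set.injOn_id _
  have hdeg : ((X : F[X]) ^ d).degree < S.card := by
    refine lt_of_le_of_lt (degree_X_pow_le d) ?_
    exact_mod_cast hd
  have h := Lagrange.eq_interpolate (f := (X : F[X]) ^ d) hinj hdeg
  have hcoeff := congrArg (fun q : F[X] => q.coeff (S.card - 1)) h
  simp only [Lagrange.interpolate_apply, finset_sum_coeff, coeff_C_mul, eval_pow, eval_X,
    id_eq] at hcoeff
  have hbasis : ∀ a ∈ S, (Lagrange.basis S id a).coeff (S.card - 1) = cnw S a := by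
    intro a ha
    have hnd : (Lagrange.basis S id a).natDegree = S.card - 1 := by
      simpa using Lagrange.natDegree_basis hinj ha
    rw [← hnd, ← leadingCoeff]
    unfold Lagrange.basis
    rw [leadingCoeff_prod]
    refine Finset.prod_congr rfl fun b hb => ?_
    have hab : (a : F) ≠ b := fun hh => (mem_erase.1 hb).1 hh.symm
    rw [Lagrange.basisDivisor]
    simp [leadingCoeff_mul, monic_X_sub_C, Monic.leadingCoeff]
  rw [Finset.sum_congr rfl (fun a ha => by rw [hbasis a ha])] at hcoeff
  rw [← hcoeff, coeff_X_pow]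
  simp [eq_comm]






theorem cn_coeff_eq_grid_sum {h : ℕ} (S : Fin h → Finset F) (t : Fin h → ℕ)
    (hcard : ∀ i, (S i).card = t i + 1) (f : MvPolynomial (Fin h) F)
    (hdeg : f.totalDegree ≤ ∑ i, t i) :
    MvPolynomial.coeff (Finsupp.equivFunOnFinite.symm t) f =
      ∑ s ∈ Fintype.piFinset S, MvPolynomial.eval s f * ∏ i, cnw (S i) (s i) := by
  classical
  have heval : ∀ s : Fin h → F, MvPolynomial.eval s f =
      ∑ d ∈ f.support, MvPolynomial.coeff d f * ∏ i, s i ^ d i :=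
    fun s => MvPolynomial.eval_eq' s f
  simp_rw [heval, Finset.sum_mul]
  rw [Finset.sum_comm]
  have key : ∀ d ∈ f.support,
      (∑ s ∈ Fintype.piFinset S, MvPolynomial.coeff d f * (∏ i, s i ^ d i) * ∏ i, cnw (S i) (s i))
      = if d = Finsupp.equivFunOnFinite.symm t then MvPolynomial.coeff d f else 0 := by
    intro d hd
    simp_rw [mul_assoc, ← Finset.mul_sum]
    have hsum : (∑ s ∈ Fintype.piFinset S, (∏ i, s i ^ d i) * ∏ i, cnw (S i) (s i))
        = ∏ i, ∑ a ∈ S i, a ^ d i * cnw (S i) a := by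
      rw [Finset.prod_univ_sum]
      exact Finset.sum_congr rfl fun s _ => (Finset.prod_mul_distrib).symm
    rw [hsum]
    by_cases hdt : d = Finsupp.equivFunOnFinite.symm t
    · subst hdt
      rw [if_pos rfl]
      have heq : ∀ i : Fin h, (∑ a ∈ S i, a ^ t i * cnw (S i) a) = 1 := by
        intro i
        have hlt : t i < (S i).card := by rw [hcard i]; omega
        rw [cnw_sum_pow _ hlt, if_pos (by rw [hcard i]; omega)]
      simp [heq]
    · rw [if_neg hdt]
      -- find j with d j < t j
      have hsumle : ∑ i, d i ≤ ∑ i, t i := by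
        refine le_trans ?_ hdeg
        have := MvPolynomial.le_totalDegree hd
        have he : (∑ i, d i) = d.sum fun _ e => e :=
          (Finsupp.sum_fintype d (fun _ e => e) fun _ => rfl).symm
        rw [he]; exact this
      have hex : ∃ j, d j < t j := by
        by_contra hc
        push_neg at hc
        have : d = Finsupp.equivFunOnFinite.symm t := by
          have hall : ∀ i, d i = t i := by
            intro i
            by_contra hne
            have h1 : t i < d i := lt_of_le_of_ne (hc i) (Ne.symm hne)
            have h2 : ∑ j, t j < ∑ j, d j :=
              Finset.sum_lt_sum (fun j _ => hc j) ⟨i, Finset.mem_univ i, h1⟩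
            omega
          ext i
          simp [Finsupp.equivFunOnFinite, hall i]
        exact hdt this
      obtain ⟨j, hj⟩ := hex
      have hzero : (∑ a ∈ S j, a ^ d j * cnw (S j) a) = 0 := by
        have hlt : d j < (S j).card := by rw [hcard j]; omega
        rw [cnw_sum_pow _ hlt, if_neg (by rw [hcard j]; omega)]
      rw [Finset.prod_eq_zero (Finset.mem_univ j) hzero, mul_zero]
  rw [Finset.sum_congr rfl key, Finset.sum_ite_eq' f.support _ _]
  split_ifs with hmem
  · rfl
  · exact MvPolynomial.notMem_support_iff.1 hmem



theorem coeff_sum_X_pow {h N : ℕ} (u : Fin h → ℕ) :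
    MvPolynomial.coeff (Finsupp.equivFunOnFinite.symm u) ((∑ i, MvPolynomial.X i) ^ N : MvPolynomial (Fin h) F) =
      if ∑ i, u i = N then (Nat.multinomial Finset.univ u : F) else 0 := by
  classical
  rw [Finset.sum_pow_eq_sum_piAntidiag]
  rw [MvPolynomial.coeff_sum]
  have hterm : ∀ k : Fin h → ℕ,
      MvPolynomial.coeff (Finsupp.equivFunOnFinite.symm u)
        ((Nat.multinomial Finset.univ k : MvPolynomial (Fin h) F) * ∏ i, MvPolynomial.X i ^ k i) =
      if k = u then (Nat.multinomial Finset.univ u : F) else 0 := by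
    intro k
    have hprod : (∏ i, (MvPolynomial.X i : MvPolynomial (Fin h) F) ^ k i) =
        MvPolynomial.monomial (Finsupp.equivFunOnFinite.symm k) 1 := by
      rw [← MvPolynomial.prod_X_pow_eq_monomial]
      rw [← Finset.prod_subset (Finset.subset_univ (Finsupp.equivFunOnFinite.symm k).support)]
      · exact Finset.prod_congr rfl fun i _ => rfl
      · intro i _ hi
        have : k i = 0 := by
          simpa [Finsupp.equivFunOnFinite] using Finsupp.notMem_support_iff.1 hi
        simp [this]
    rw [hprod]
    rw [show ((Nat.multinomial Finset.univ k : MvPolynomial (Fin h) F)) = MvPolynomial.C ((Nat.multinomial Finset.univ k : ℕ) : F) from (MvPolynomial.C_eq_coe_nat _).symm]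
    rw [MvPolynomial.coeff_C_mul, MvPolynomial.coeff_monomial]
    by_cases hk : k = u
    · subst hk; simp
    · rw [if_neg, if_neg hk, mul_zero]
      intro hc
      exact hk (by simpa using congrArg Finsupp.equivFunOnFinite hc)
  rw [Finset.sum_congr rfl fun k _ => hterm k, Finset.sum_ite_eq' _ u]
  simp [Finset.mem_piAntidiag, eq_comm]




theorem cast_descFactorial {R : Type*} [CommRing R] (n k : ℕ) :
    ((n.descFactorial k : ℕ) : R) = ∏ l ∈ Finset.range k, ((n : R) - l) := by
  induction k with
  | zero => simp
  | succ k ih =>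
    rw [Finset.prod_range_succ, ← ih]
    by_cases hnk : k ≤ n
    · rw [Nat.descFactorial_succ]
      push_cast [Nat.cast_sub hnk]
      ring
    · push_neg at hnk
      rw [Nat.descFactorial_eq_zero_iff_lt.2 (by omega), Nat.descFactorial_eq_zero_iff_lt.2 hnk]
      simp

/-- The Vandermonde polynomial in `MvPolynomial`. -/
noncomputable def vandPoly (h : ℕ) (F : Type*) [Field F] : MvPolynomial (Fin h) F :=
  ∏ i, ∏ j ∈ Finset.Ioi i, (MvPolynomial.X j - MvPolynomial.X i)

theorem vandPoly_eq_sum (h : ℕ) :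
    vandPoly h F = ∑ σ : Equiv.Perm (Fin h), MvPolynomial.C ((Equiv.Perm.sign σ : ℤ) : F) *
      MvPolynomial.monomial (Finsupp.equivFunOnFinite.symm fun j => ((σ.symm j : Fin h) : ℕ)) 1 := by
  classical
  have hdet := Matrix.det_vandermonde (fun i => (MvPolynomial.X i : MvPolynomial (Fin h) F))
  rw [Matrix.det_apply'] at hdet
  rw [vandPoly, ← hdet]
  refine Finset.sum_congr rfl fun σ _ => ?_
  have hC : ((Equiv.Perm.sign σ : ℤ) : MvPolynomial (Fin h) F) = MvPolynomial.C ((Equiv.Perm.sign σ : ℤ) : F) :=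
    (map_intCast (MvPolynomial.C : F →+* MvPolynomial (Fin h) F) _).symm
  rw [hC]
  congr 1
  have h1 : (∏ i, Matrix.vandermonde (fun i => (MvPolynomial.X i : MvPolynomial (Fin h) F)) (σ i) i)
      = ∏ i, MvPolynomial.X (σ i) ^ (i : ℕ) := rfl
  rw [h1]
  have h2 : (∏ i, (MvPolynomial.X (σ i) : MvPolynomial (Fin h) F) ^ (i : ℕ))
      = ∏ j, (MvPolynomial.X j : MvPolynomial (Fin h) F) ^ ((σ.symm j : Fin h) : ℕ) := by
    rw [← Equiv.prod_comp σ (fun j => (MvPolynomial.X j : MvPolynomial (Fin h) F) ^ ((σ.symm j : Fin h) : ℕ))]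
    exact Finset.prod_congr rfl fun i _ => by rw [Equiv.symm_apply_apply]
  rw [h2]
  rw [← MvPolynomial.prod_X_pow_eq_monomial]
  rw [← Finset.prod_subset (Finset.subset_univ _)]
  · exact Finset.prod_congr rfl fun i _ => rfl
  · intro i _ hi
    have : ((σ.symm i : Fin h) : ℕ) = 0 := by
      simpa [Finsupp.equivFunOnFinite] using Finsupp.notMem_support_iff.1 hi
    simp [this]

theorem key_coeff_formula {h N : ℕ} (t : Fin h → ℕ)
    (hsum : ∑ i, t i = N + ∑ i : Fin h, (i : ℕ)) :
    (∏ i, ((t i).factorial : F)) * MvPolynomial.coeff (Finsupp.equivFunOnFinite.symm t)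
      (((∑ i, MvPolynomial.X i) ^ N) * vandPoly h F)
    = (N.factorial : F) * ∏ i, ∏ j ∈ Finset.Ioi i, ((t j : F) - (t i : F)) := by
  classical
  -- RHS as a determinant expansion
  have hps_monic : ∀ j : Fin h, (∏ l ∈ Finset.range (j : ℕ), (Polynomial.X - Polynomial.C (l : F))).Monic :=
    fun j => monic_prod_of_monic _ _ fun l _ => monic_X_sub_C _
  have hps_deg : ∀ j : Fin h, (∏ l ∈ Finset.range (j : ℕ), (Polynomial.X - Polynomial.C (l : F))).natDegree = (j : ℕ) := by
    intro j
    rw [Polynomial.natDegree_prod_of_monic _ _ fun l _ => monic_X_sub_C _]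
    have h1 : ∀ l ∈ Finset.range (j : ℕ), (Polynomial.X - Polynomial.C (l : F)).natDegree = 1 :=
      fun l _ => Polynomial.natDegree_X_sub_C _
    rw [Finset.sum_congr rfl h1]
    simp
  have hrhs : (∏ i, ∏ j ∈ Finset.Ioi i, ((t j : F) - (t i : F)))
      = ∑ σ : Equiv.Perm (Fin h), ((Equiv.Perm.sign σ : ℤ) : F) *
          ∏ i, ((t (σ i)).descFactorial (i : ℕ) : F) := by
    have hdet := Matrix.det_eval_matrixOfPolynomials_eq_det_vandermonde
      (fun i => ((t i : ℕ) : F)) (fun j => ∏ l ∈ Finset.range (j : ℕ), (Polynomial.X - Polynomial.C (l : F)))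
      hps_deg hps_monic
    rw [Matrix.det_vandermonde] at hdet
    rw [hdet, Matrix.det_apply']
    refine Finset.sum_congr rfl fun σ _ => ?_
    congr 1
    refine Finset.prod_congr rfl fun i _ => ?_
    rw [Matrix.of_apply, cast_descFactorial]
    rw [Polynomial.eval_prod]
    exact Finset.prod_congr rfl fun l _ => by simp
  rw [hrhs, vandPoly_eq_sum, Finset.mul_sum, MvPolynomial.coeff_sum, Finset.mul_sum, Finset.mul_sum]
  refine Finset.sum_congr rfl fun σ _ => ?_
  set e : Fin h → ℕ := fun j => ((σ.symm j : Fin h) : ℕ) with he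
  have hc : (((∑ i, MvPolynomial.X i) ^ N : MvPolynomial (Fin h) F)) *
      (MvPolynomial.C ((Equiv.Perm.sign σ : ℤ) : F) * MvPolynomial.monomial (Finsupp.equivFunOnFinite.symm e) 1)
      = MvPolynomial.C ((Equiv.Perm.sign σ : ℤ) : F) *
        ((((∑ i, MvPolynomial.X i) ^ N : MvPolynomial (Fin h) F)) * MvPolynomial.monomial (Finsupp.equivFunOnFinite.symm e) 1) := by
    ring
  rw [hc, MvPolynomial.coeff_C_mul, MvPolynomial.coeff_mul_monomial']
  by_cases hle : Finsupp.equivFunOnFinite.symm e ≤ Finsupp.equivFunOnFinite.symm t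
  · rw [if_pos hle]
    have hle' : ∀ j, e j ≤ t j := by
      intro j
      have := Finsupp.le_def.1 hle j
      simpa using this
    have hdiff : (Finsupp.equivFunOnFinite.symm t - Finsupp.equivFunOnFinite.symm e)
        = Finsupp.equivFunOnFinite.symm (fun j => t j - e j) := by
      ext j; simp [Finsupp.tsub_apply]
    have hsume : ∑ j, e j = ∑ i : Fin h, (i : ℕ) := by
      rw [he]
      exact Equiv.sum_comp σ.symm (fun i => (i : ℕ))
    have hsumu : ∑ j, (t j - e j) = N := by
      rw [Finset.sum_tsub_distrib Finset.univ (fun j _ => hle' j), hsum, hsume]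
      omega
    rw [hdiff, coeff_sum_X_pow, if_pos hsumu, mul_one]
    -- now the factorial identity, in ℕ
    have hnat : (∏ j, (t j).factorial) * Nat.multinomial Finset.univ (fun j => t j - e j)
        = N.factorial * ∏ j, (t j).descFactorial (e j) := by
      have hspec := Nat.multinomial_spec Finset.univ (fun j => t j - e j)
      have hfac : ∀ j, (t j).factorial = (t j).descFactorial (e j) * (t j - e j).factorial := by
        intro j
        rw [mul_comm]
        exact (Nat.factorial_mul_descFactorial (hle' j)).symm
      calc (∏ j, (t j).factorial) * Nat.multinomial Finset.univ (fun j => t j - e j)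
          = (∏ j, (t j).descFactorial (e j)) *
            ((∏ j, (t j - e j).factorial) * Nat.multinomial Finset.univ (fun j => t j - e j)) := by
            rw [Finset.prod_congr rfl fun j _ => hfac j, Finset.prod_mul_distrib]; ring
        _ = (∏ j, (t j).descFactorial (e j)) * (∑ j, (t j - e j)).factorial := by rw [hspec]
        _ = N.factorial * ∏ j, (t j).descFactorial (e j) := by rw [hsumu]; ring
    have hprodre : (∏ j, ((t j).descFactorial (e j) : ℕ)) = ∏ i, (t (σ i)).descFactorial (i : ℕ) := by
      rw [← Equiv.prod_comp σ (fun j => (t j).descFactorial (e j))]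
      refine Finset.prod_congr rfl fun i _ => ?_
      rw [he]
      simp
    have := congrArg (fun n : ℕ => (n : F)) hnat
    push_cast at this
    calc (∏ i, ((t i).factorial : F)) * (((Equiv.Perm.sign σ : ℤ) : F) * (Nat.multinomial Finset.univ (fun j => t j - e j) : F))
        = ((Equiv.Perm.sign σ : ℤ) : F) * ((∏ i, ((t i).factorial : F)) * (Nat.multinomial Finset.univ (fun j => t j - e j) : F)) := by ring
      _ = ((Equiv.Perm.sign σ : ℤ) : F) * ((N.factorial : F) * ∏ j, ((t j).descFactorial (e j) : F)) := by rw [this]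
      _ = (N.factorial : F) * (((Equiv.Perm.sign σ : ℤ) : F) * ∏ i, ((t (σ i)).descFactorial (i : ℕ) : F)) := by
          have := congrArg (fun n : ℕ => (n : F)) hprodre
          push_cast at this
          rw [this]; ring
  · rw [if_neg hle, mul_zero, mul_zero]
    have hex : ∃ j, t j < e j := by
      by_contra hc2
      push_neg at hc2
      exact hle (Finsupp.le_def.2 (by intro j; simpa using hc2 j))
    obtain ⟨j, hj⟩ := hex
    have : (t (σ (σ.symm j))).descFactorial ((σ.symm j : Fin h) : ℕ) = 0 := by
      rw [Equiv.apply_symm_apply]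
      exact Nat.descFactorial_eq_zero_iff_lt.2 hj
    rw [Finset.prod_eq_zero (Finset.mem_univ (σ.symm j)) (by exact_mod_cast congrArg (Nat.cast : ℕ → F) this)]
    ring









/-! ### Construction of the exponent sequence -/

def sfun (c a j : ℕ) : ℕ := min c (j * a)

def dfun (c a h i : ℕ) : ℕ := sfun c a (h - i) - sfun c a (h - 1 - i)

def tfun (c a h i : ℕ) : ℕ := i + dfun c a h i

lemma sfun_mono (c a : ℕ) : Monotone (sfun c a) :=
  fun _ _ hjj => le_min (min_le_left _ _) (le_trans (min_le_right _ _) (Nat.mul_le_mul_right a hjj))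

lemma sfun_step_le (c a j : ℕ) : sfun c a (j + 1) ≤ sfun c a j + a := by
  unfold sfun
  have : (j + 1) * a = j * a + a := by ring
  omega

lemma sfun_anti_step (c a : ℕ) {j j' : ℕ} (hjj : j ≤ j') :
    sfun c a (j' + 1) - sfun c a j' ≤ sfun c a (j + 1) - sfun c a j := by
  unfold sfun
  have h1 : j * a ≤ j' * a := Nat.mul_le_mul_right a hjj
  have e1 : (j + 1) * a = j * a + a := by ring
  have e2 : (j' + 1) * a = j' * a + a := by ring
  omega

lemma dfun_mono {c a h : ℕ} {i i' : ℕ} (hi : i ≤ i') (hi' : i' < h) :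
    dfun c a h i ≤ dfun c a h i' := by
  unfold dfun
  have e1 : h - i = (h - 1 - i) + 1 := by omega
  have e2 : h - i' = (h - 1 - i') + 1 := by omega
  rw [e1, e2]
  exact sfun_anti_step c a (by omega)

lemma dfun_le {c a h : ℕ} (i : ℕ) (hi : i < h) : dfun c a h i ≤ a := by
  unfold dfun
  have e1 : h - i = (h - 1 - i) + 1 := by omega
  rw [e1]
  have := sfun_step_le c a (h - 1 - i)
  omega

lemma sum_dfun {c a h : ℕ} (hc : c ≤ h * a) : ∑ i ∈ Finset.range h, dfun c a h i = c := by
  have hstep : ∀ i ∈ Finset.range h, dfun c a h i =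
      (fun j => sfun c a (j + 1) - sfun c a j) (h - 1 - i) := by
    intro i hi
    rw [Finset.mem_range] at hi
    unfold dfun
    have e1 : h - i = (h - 1 - i) + 1 := by omega
    have e2 : h - 1 - i = h - 1 - i := rfl
    rw [e1]
  rw [Finset.sum_congr rfl hstep,
    Finset.sum_range_reflect (fun j => sfun c a (j + 1) - sfun c a j) h,
    Finset.sum_range_tsub (f := sfun c a) (fun x y hxy => sfun_mono c a hxy)]
  unfold sfun
  simp
  omega

lemma tfun_strictMonoOn {c a h : ℕ} {i i' : ℕ} (hii : i < i') (hi' : i' < h) :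
    tfun c a h i < tfun c a h i' := by
  have := dfun_mono (c := c) (a := a) (le_of_lt hii) hi'
  unfold tfun
  omega

lemma tfun_le {c a h : ℕ} (i : ℕ) (hi : i < h) : tfun c a h i ≤ (h - 1) + a := by
  have := dfun_le (c := c) (a := a) i hi
  unfold tfun
  omega

lemma sum_tfun {c a h : ℕ} (hc : c ≤ h * a) :
    ∑ i ∈ Finset.range h, tfun c a h i = (∑ i ∈ Finset.range h, i) + c := by
  unfold tfun
  rw [Finset.sum_add_distrib, sum_dfun hc]

/-! ### total degree of polynomial composition -/

lemma totalDegree_aeval_le {σ : Type*} (q : F[X]) (s : MvPolynomial σ F)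
    (hs : s.totalDegree ≤ 1) : (Polynomial.aeval s q).totalDegree ≤ q.natDegree := by
  rw [Polynomial.aeval_eq_sum_range]
  refine le_trans (MvPolynomial.totalDegree_finset_sum _ _) ?_
  refine Finset.sup_le fun i hi => ?_
  refine le_trans (MvPolynomial.totalDegree_smul_le _ _) ?_
  refine le_trans (MvPolynomial.totalDegree_pow _ _) ?_
  rw [Finset.mem_range] at hi
  calc i * s.totalDegree ≤ i * 1 := Nat.mul_le_mul_left i hs
    _ ≤ q.natDegree := by omega

theorem cn_upper (p h : ℕ) (hp : p.Prime) (h1 : 1 ≤ h) (h2 : h ≤ p - 1)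
    (A : Finset (ZMod p)) (g : ZMod p)
    (hg : ¬ ∃ B ⊆ A, B.card = h ∧ B.sum id = g) : A.card ≤ (p - 2) / h + h := by
  haveI : Fact p.Prime := ⟨hp⟩
  by_contra hcard
  push_neg at hcard
  set k := (p - 2) / h with hk
  have hp2 : 2 ≤ p := hp.two_le
  have hdm : h * k + (p - 2) % h = p - 2 := by rw [hk]; exact Nat.div_add_mod (p - 2) h
  have hmod := Nat.mod_lt (p - 2) (show 0 < h by omega)
  have hk1 : h * k ≤ p - 2 := by omega
  have hk2 : p - 1 ≤ h * (k + 1) := by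
    have hexp : h * (k + 1) = h * k + h := by ring
    omega
  have hkh : k + h ≤ p - 1 := by
    have hdiv : k < p - h := by
      rw [hk, Nat.div_lt_iff_lt_mul (show 0 < h by omega)]
      zify [show h ≤ p by omega, show 2 ≤ p by omega]
      nlinarith [mul_nonneg (show (0:ℤ) ≤ (h:ℤ) - 1 by omega)
        (show (0:ℤ) ≤ (p:ℤ) - 1 - (h:ℤ) by omega)]
    omega
  obtain ⟨A', hA'sub, hA'card⟩ := Finset.exists_subset_card_eq
    (show k + h + 1 ≤ A.card from hcard)
  -- exponent sequence
  set t : Fin h → ℕ := fun i => tfun (p - 1) (k + 1) h i with ht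
  have htsum : ∑ i, t i = (p - 1) + ∑ i : Fin h, (i : ℕ) := by
    rw [ht, Fin.sum_univ_eq_sum_range (fun i => tfun (p - 1) (k + 1) h i) h,
      sum_tfun hk2, Fin.sum_univ_eq_sum_range (fun i => i) h]
    omega
  have htle : ∀ i : Fin h, t i ≤ k + h := by
    intro i
    have h3 := tfun_le (c := p - 1) (a := k + 1) (i : ℕ) i.isLt
    have h4 : t i = tfun (p - 1) (k + 1) h (i : ℕ) := rfl
    omega
  have htmono : ∀ i j : Fin h, i < j → t i < t j := fun i j hij =>
    tfun_strictMonoOn (Fin.lt_iff_val_lt_val.1 hij) j.isLt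
  -- subsets
  have hSex : ∀ i : Fin h, ∃ Si, Si ⊆ A' ∧ Si.card = t i + 1 := fun i =>
    Finset.exists_subset_card_eq (by rw [hA'card]; have := htle i; omega)
  choose S hSsub hScard using hSex
  -- polynomials
  set G : MvPolynomial (Fin h) (ZMod p) := ∑ i, MvPolynomial.X i with hG
  set P : Polynomial (ZMod p) := ∏ e ∈ Finset.univ.erase g, (Polynomial.X - Polynomial.C e) with hP
  set f : MvPolynomial (Fin h) (ZMod p) := (Polynomial.aeval G P) * vandPoly h (ZMod p) with hf
  have hPmonic : P.Monic := monic_prod_of_monic _ _ fun e _ => monic_X_sub_C e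
  have hcardu : (Finset.univ.erase g).card = p - 1 := by
    rw [Finset.card_erase_of_mem (Finset.mem_univ g), Finset.card_univ, ZMod.card]
  have hPdeg : P.natDegree = p - 1 := by
    rw [hP, Polynomial.natDegree_prod_of_monic _ _ fun e _ => monic_X_sub_C e]
    have hone : ∀ e ∈ Finset.univ.erase g, (Polynomial.X - Polynomial.C e).natDegree = 1 :=
      fun e _ => Polynomial.natDegree_X_sub_C e
    rw [Finset.sum_congr rfl hone]
    simp [hcardu]
  have hGdeg : G.totalDegree ≤ 1 := by
    rw [hG]
    refine le_trans (MvPolynomial.totalDegree_finset_sum _ _) (Finset.sup_le fun i _ => ?_)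
    simp [MvPolynomial.totalDegree_X]
  have hVdeg : (vandPoly h (ZMod p)).totalDegree ≤ ∑ i : Fin h, (i : ℕ) := by
    refine le_trans (MvPolynomial.totalDegree_finset_prod _ _) ?_
    have hterm : ∀ i : Fin h,
        (∏ j ∈ Finset.Ioi i, (MvPolynomial.X j - MvPolynomial.X i :
          MvPolynomial (Fin h) (ZMod p))).totalDegree ≤ (h - 1 - (i : ℕ)) := by
      intro i
      refine le_trans (MvPolynomial.totalDegree_finset_prod _ _) ?_
      have hone : ∀ j ∈ Finset.Ioi i, (MvPolynomial.X j - MvPolynomial.X i :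
          MvPolynomial (Fin h) (ZMod p)).totalDegree ≤ 1 := by
        intro j _
        rw [sub_eq_add_neg]
        refine le_trans (MvPolynomial.totalDegree_add _ _) ?_
        rw [MvPolynomial.totalDegree_neg]
        simp [MvPolynomial.totalDegree_X]
      refine le_trans (Finset.sum_le_sum hone) ?_
      rw [Finset.sum_const, smul_eq_mul, mul_one, Fin.card_Ioi]
    refine le_trans (Finset.sum_le_sum fun i _ => hterm i) ?_
    rw [Fin.sum_univ_eq_sum_range (fun i => h - 1 - i) h,
      Fin.sum_univ_eq_sum_range (fun i => i) h,
      Finset.sum_range_reflect (fun i => i) h]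
  have hfdeg : f.totalDegree ≤ ∑ i, t i := by
    rw [hf, htsum]
    refine le_trans (MvPolynomial.totalDegree_mul _ _) ?_
    have haev := totalDegree_aeval_le P G hGdeg
    rw [hPdeg] at haev
    omega
  -- vanishing on the grid
  have hvanish : ∀ s ∈ Fintype.piFinset S, MvPolynomial.eval s f = 0 := by
    intro s hs
    have hsA : ∀ i, s i ∈ A' := fun i => hSsub i (Fintype.mem_piFinset.1 hs i)
    rw [hf, map_mul]
    by_cases hinj : Function.Injective s
    · have hsumne : (∑ i, s i) ≠ g := by
        intro hsum0
        apply hg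
        refine ⟨Finset.image s Finset.univ, ?_, ?_, ?_⟩
        · intro x hx
          obtain ⟨i, _, rfl⟩ := Finset.mem_image.1 hx
          exact hA'sub (hsA i)
        · rw [Finset.card_image_of_injective _ hinj, Finset.card_univ, Fintype.card_fin]
        · rw [Finset.sum_image (fun i _ j _ hij => hinj hij)]
          simpa using hsum0
      have hGval : MvPolynomial.eval s G = ∑ i, s i := by
        rw [hG, map_sum]
        simp
      have hzero : MvPolynomial.eval s ((Polynomial.aeval G P : MvPolynomial (Fin h) (ZMod p))) = 0 := by
        rw [hP, map_prod, map_prod]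
        refine Finset.prod_eq_zero (i := ∑ i, s i) ?_ ?_
        · rw [Finset.mem_erase]
          exact ⟨hsumne, Finset.mem_univ _⟩
        · have hfac : (Polynomial.aeval G) (Polynomial.X - Polynomial.C (∑ i, s i))
              = G - MvPolynomial.C (∑ i, s i) := by
            rw [map_sub, Polynomial.aeval_X, Polynomial.aeval_C]
            rfl
          rw [hfac, map_sub, hGval, MvPolynomial.eval_C, sub_self]
      rw [hzero, zero_mul]
    · have hV0 : MvPolynomial.eval s (vandPoly h (ZMod p)) = 0 := by
        rw [Function.not_injective_iff] at hinj
        obtain ⟨a, b, hab, hne⟩ := hinj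
        rw [vandPoly, map_prod]
        rcases lt_or_gt_of_ne hne with hlt | hlt
        · refine Finset.prod_eq_zero (Finset.mem_univ a) ?_
          rw [map_prod]
          refine Finset.prod_eq_zero (Finset.mem_Ioi.2 hlt) ?_
          simp [hab]
        · refine Finset.prod_eq_zero (Finset.mem_univ b) ?_
          rw [map_prod]
          refine Finset.prod_eq_zero (Finset.mem_Ioi.2 hlt) ?_
          simp [hab]
      rw [hV0, mul_zero]
  -- the coefficient is zero by the grid formula
  have hcoeff0 : MvPolynomial.coeff (Finsupp.equivFunOnFinite.symm t) f = 0 := by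
    rw [cn_coeff_eq_grid_sum S t hScard f hfdeg]
    exact Finset.sum_eq_zero fun s hs => by rw [hvanish s hs, zero_mul]
  -- split off the top part
  set Q : Polynomial (ZMod p) := P - Polynomial.X ^ (p - 1) with hQ
  have hQdeg : Q.natDegree ≤ p - 2 := by
    by_cases hQ0 : Q = 0
    · rw [hQ0]; simp
    · have hd : Q.degree < ((p - 1 : ℕ) : WithBot ℕ) := by
        rw [hQ]
        have hdeg1 : P.degree = ((p - 1 : ℕ) : WithBot ℕ) := by
          rw [Polynomial.degree_eq_natDegree hPmonic.ne_zero, hPdeg]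
        refine lt_of_lt_of_le (Polynomial.degree_sub_lt ?_ hPmonic.ne_zero ?_) (le_of_eq hdeg1)
        · rw [hdeg1, Polynomial.degree_X_pow]
        · rw [hPmonic.leadingCoeff, Polynomial.leadingCoeff_X_pow]
      have := (Polynomial.natDegree_lt_iff_degree_lt hQ0).2 hd
      omega
  have hsplit : MvPolynomial.coeff (Finsupp.equivFunOnFinite.symm t) f
      = MvPolynomial.coeff (Finsupp.equivFunOnFinite.symm t)
        ((G ^ (p - 1)) * vandPoly h (ZMod p)) := by
    have hPdecomp : (Polynomial.aeval G P : MvPolynomial (Fin h) (ZMod p))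
        = G ^ (p - 1) + Polynomial.aeval G Q := by
      rw [hQ, map_sub]
      simp [Polynomial.aeval_X_pow]
    rw [hf, hPdecomp, add_mul, MvPolynomial.coeff_add]
    have hsupp : ∑ i ∈ (Finsupp.equivFunOnFinite.symm t).support,
        (Finsupp.equivFunOnFinite.symm t) i = ∑ i, t i := by
      rw [Finset.sum_subset (Finset.subset_univ _)
        (fun i _ hnot => Finsupp.notMem_support_iff.1 hnot)]
      simp [Finsupp.equivFunOnFinite]; rfl
    have hzero2 : MvPolynomial.coeff (Finsupp.equivFunOnFinite.symm t)
        ((Polynomial.aeval G Q : MvPolynomial (Fin h) (ZMod p)) * vandPoly h (ZMod p)) = 0 := by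
      apply MvPolynomial.coeff_eq_zero_of_totalDegree_lt
      rw [hsupp, htsum]
      refine lt_of_le_of_lt (MvPolynomial.totalDegree_mul _ _) ?_
      have haev := le_trans (totalDegree_aeval_le Q G hGdeg) hQdeg
      have := hVdeg
      omega
    rw [hzero2, add_zero]
  -- the coefficient is nonzero by the key formula
  have hne : MvPolynomial.coeff (Finsupp.equivFunOnFinite.symm t)
      ((G ^ (p - 1)) * vandPoly h (ZMod p)) ≠ 0 := by
    intro h0
    have hkey := key_coeff_formula (F := ZMod p) t (by rw [htsum])
    rw [hG] at h0
    rw [h0, mul_zero] at hkey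
    have hfac : (((p - 1).factorial : ℕ) : ZMod p) ≠ 0 := by
      rw [Ne, ZMod.natCast_eq_zero_iff]
      intro hdvd
      have := (Nat.Prime.dvd_factorial hp).1 hdvd
      omega
    have hprod : (∏ i, ∏ j ∈ Finset.Ioi i, ((t j : ZMod p) - (t i : ZMod p))) ≠ 0 := by
      refine Finset.prod_ne_zero_iff.2 fun i _ => Finset.prod_ne_zero_iff.2 fun j hj => ?_
      have hij : i < j := Finset.mem_Ioi.1 hj
      have hlt := htmono i j hij
      have hcast : ((t j : ZMod p) - (t i : ZMod p)) = ((t j - t i : ℕ) : ZMod p) := by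
        rw [Nat.cast_sub (le_of_lt hlt)]
      rw [hcast, Ne, ZMod.natCast_eq_zero_iff]
      intro hdvd
      have hub : t j - t i < p := by have := htle j; omega
      have hpos : 0 < t j - t i := by omega
      exact absurd (Nat.le_of_dvd hpos hdvd) (by omega)
    exact (mul_ne_zero hfac hprod) hkey.symm
  exact hne (hsplit ▸ hcoeff0)

end CN


lemma subset_range_sum_bounds (n h : ℕ) (B : Finset ℕ) (hB : B ⊆ Finset.range n)
    (hcard : B.card = h) :
    (∑ i ∈ Finset.range h, i) ≤ B.sum id ∧
      B.sum id ≤ h * (n - h) + ∑ i ∈ Finset.range h, i := by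
  have hhn : h ≤ n := by
    have := Finset.card_le_card hB
    simpa [hcard] using this
  set f := B.orderEmbOfFin hcard with hf
  have hmem : ∀ i, f i ∈ B := fun i => B.orderEmbOfFin_mem hcard i
  have hlt : ∀ i : Fin h, f i < n := fun i => Finset.mem_range.1 (hB (hmem i))
  have hsmono : StrictMono f := f.strictMono
  have himg : Finset.univ.image (fun i : Fin h => f i) = B := by
    apply Finset.eq_of_subset_of_card_le
    · intro x hx
      obtain ⟨i, _, rfl⟩ := Finset.mem_image.1 hx
      exact hmem i
    · rw [Finset.card_image_of_injective _ hsmono.injective]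
      simp [hcard]
  have hsum : B.sum id = ∑ i : Fin h, f i := by
    rw [← himg, Finset.sum_image (fun i _ j _ hij => hsmono.injective hij)]
    rfl
  have claim1 : ∀ m (hm : m < h), m ≤ f ⟨m, hm⟩ := by
    intro m
    induction m with
    | zero => intro; exact Nat.zero_le _
    | succ m ih =>
      intro hm
      have h1 : f ⟨m, by omega⟩ < f ⟨m + 1, hm⟩ := hsmono (by simp [Fin.lt_def])
      have := ih (by omega)
      omega
  have claim2 : ∀ j (hj : j < h), f ⟨h - 1 - j, by omega⟩ ≤ n - 1 - j := by
    intro j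
    induction j with
    | zero =>
      intro hj
      have := hlt ⟨h - 1 - 0, by omega⟩
      omega
    | succ j ih =>
      intro hj
      have h1 : f ⟨h - 1 - (j + 1), by omega⟩ < f ⟨h - 1 - j, by omega⟩ :=
        hsmono (by simp [Fin.lt_def]; omega)
      have := ih (by omega)
      omega
  have hlb : ∀ i : Fin h, (i : ℕ) ≤ f i := fun i => claim1 i i.isLt
  have hub : ∀ i : Fin h, f i ≤ n - h + (i : ℕ) := by
    intro i
    have hi := i.isLt
    have h1 := claim2 (h - 1 - (i : ℕ)) (by omega)
    have h2 : (⟨h - 1 - (h - 1 - (i : ℕ)), by omega⟩ : Fin h) = i := by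
      ext; simp; omega
    rw [h2] at h1
    omega
  constructor
  · rw [hsum, ← Fin.sum_univ_eq_sum_range (fun i => i) h]
    exact Finset.sum_le_sum fun i _ => hlb i
  · rw [hsum]
    calc ∑ i : Fin h, f i ≤ ∑ i : Fin h, (n - h + (i : ℕ)) :=
          Finset.sum_le_sum fun i _ => hub i
      _ = h * (n - h) + ∑ i ∈ Finset.range h, i := by
          rw [Finset.sum_add_distrib, Fin.sum_univ_eq_sum_range (fun i => i) h]
          simp [mul_comm]

theorem cn_lower (p h : ℕ) (hp : p.Prime) (h1 : 1 ≤ h) (h2 : h ≤ p - 1) :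
    ∃ A : Finset (ZMod p), A.card = (p - 2) / h + h ∧
      ∃ g : ZMod p, ¬ ∃ B ⊆ A, B.card = h ∧ B.sum id = g := by
  haveI : Fact p.Prime := ⟨hp⟩
  have hp2 : 2 ≤ p := hp.two_le
  set k := (p - 2) / h with hk
  have hdm : h * k + (p - 2) % h = p - 2 := by rw [hk]; exact Nat.div_add_mod (p - 2) h
  have hmod : (p - 2) % h < h := Nat.mod_lt _ (by omega)
  have hk1 : h * k ≤ p - 2 := by omega
  have hkh : k + h ≤ p - 1 := by
    have hdiv : k < p - h := by
      rw [hk, Nat.div_lt_iff_lt_mul (show 0 < h by omega)]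
      zify [show h ≤ p by omega, show 2 ≤ p by omega]
      nlinarith [mul_nonneg (show (0:ℤ) ≤ (h:ℤ) - 1 by omega)
        (show (0:ℤ) ≤ (p:ℤ) - 1 - (h:ℤ) by omega)]
    omega
  set L := ∑ i ∈ Finset.range h, i with hL
  have hinjOn : Set.InjOn (Nat.cast : ℕ → ZMod p) (Finset.range (k + h) : Set ℕ) := by
    intro a ha b hb hab
    simp only [Finset.coe_range, Set.mem_Iio] at ha hb
    have hav := ZMod.val_cast_of_lt (show a < p by omega)
    have hbv := ZMod.val_cast_of_lt (show b < p by omega)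
    rw [← hav, ← hbv, hab]
  refine ⟨(Finset.range (k + h)).image (Nat.cast : ℕ → ZMod p), ?_, ?_⟩
  · rw [Finset.card_image_of_injOn hinjOn, Finset.card_range]
  · refine ⟨((L + h * k + 1 : ℕ) : ZMod p), ?_⟩
    rintro ⟨B, hBsub, hBcard, hBsum⟩
    -- pull back to ℕ
    set B' := (Finset.range (k + h)).filter (fun n : ℕ => ((n : ZMod p) ∈ B)) with hB'
    have himg : B'.image (Nat.cast : ℕ → ZMod p) = B := by
      apply Finset.Subset.antisymm
      · intro x hx
        obtain ⟨a, ha, rfl⟩ := Finset.mem_image.1 hx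
        exact (Finset.mem_filter.1 ha).2
      · intro b hb
        obtain ⟨a, ha, rfl⟩ := Finset.mem_image.1 (hBsub hb)
        exact Finset.mem_image.2 ⟨a, Finset.mem_filter.2 ⟨ha, hb⟩, rfl⟩
    have hB'sub : B' ⊆ Finset.range (k + h) := Finset.filter_subset _ _
    have hB'card : B'.card = h := by
      rw [← hBcard, ← himg, Finset.card_image_of_injOn (hinjOn.mono (by
        exact_mod_cast hB'sub))]
    have hbounds := subset_range_sum_bounds (k + h) h B' hB'sub hB'card
    obtain ⟨hlb, hub0⟩ := hbounds
    rw [Nat.add_sub_cancel] at hub0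
    have hsumcast : B.sum id = ((B'.sum id : ℕ) : ZMod p) := by
      rw [← himg, Finset.sum_image (fun a ha b hb hab => hinjOn (hB'sub ha) (hB'sub hb) hab)]
      push_cast
      rfl
    have heq : ((B'.sum id : ℕ) : ZMod p) = ((L + h * k + 1 : ℕ) : ZMod p) := by
      rw [← hsumcast, hBsum]
    have hmodeq : B'.sum id ≡ L + h * k + 1 [MOD p] :=
      (ZMod.natCast_eq_natCast_iff _ _ _).1 heq
    have hdvd : p ∣ (L + h * k + 1) - B'.sum id :=
      (Nat.modEq_iff_dvd' (by omega)).1 hmodeq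
    have hDpos : 1 ≤ (L + h * k + 1) - B'.sum id := by omega
    have := Nat.le_of_dvd (by omega) hdvd
    omega


theorem stmt0 (p h : ℕ) (hp : p.Prime) (h1 : 1 ≤ h) (h2 : h ≤ p - 1) :
    IsGreatest {m : ℕ | ∃ A : Finset (ZMod p), A.card = m ∧
      ∃ g : ZMod p, ¬ ∃ B ⊆ A, B.card = h ∧ B.sum id = g} ((p - 2) / h + h) := by
  constructor
  · obtain ⟨A, hA, g, hgne⟩ := cn_lower p h hp h1 h2
    exact ⟨A, hA, g, hgne⟩
  · rintro m ⟨A, rfl, g, hgne⟩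
    exact cn_upper p h hp h1 h2 A g hgne
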